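/- Let X be an infinite set and let G be any subgroup of the permutation group of X containing 𝔖(X). Then 𝔖(X) and 𝔄(X) are normal subgroups of G; the quotient group 𝔖(X)/𝔄(X) has order 2; and the image of 𝔖(X)/𝔄(X) in G/𝔄(X) is contained in the center of G/𝔄(X), so that 1 → ℤ/2ℤ → G/𝔄(X) → G/𝔖(X) → 1 is a central extension. -/

import Mathlib

noncomputable section

/-- `𝔖(X)`: the subgroup of finitely supported permutations of a set `X`. -/
def finSuppPerm (X : Type*) : Subgroup (Equiv.Perm X) where
  carrier := {f | {x | f x ≠ x}.Finite}
  one_mem' := by simp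
  mul_mem' := by
    intro f g hf hg
    apply (hf.union hg).subset
    intro x hx
    by_contra h
    simp only [Set.mem_union, Set.mem_setOf_eq, not_or, not_not] at h
    exact hx (by simp [Equiv.Perm.mul_apply, h.1, h.2])
  inv_mem' := by
    intro f hf
    show {x | f⁻¹ x ≠ x}.Finite
    have h : {x | f⁻¹ x ≠ x} = {x | f x ≠ x} := by
      ext x
      simp [Equiv.Perm.inv_eq_iff_eq, ne_comm]
      first
        | (rw [Equiv.eq_symm_apply]; exact not_congr eq_comm)
        | exact fun _ => by grind
    rw [h]
    exact hf

/-- `𝔄(X)`: the finitary alternating group of a set `X`, i.e. the commutator subgroup of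
the group `𝔖(X)` of finitely supported permutations, viewed as a subgroup of `Equiv.Perm X`. -/
def finAltPerm (X : Type*) : Subgroup (Equiv.Perm X) :=
  Subgroup.map (finSuppPerm X).subtype (commutator ↥(finSuppPerm X))

open Equiv Equiv.Perm
open scoped Classical

namespace FinSuppAux

variable {X : Type*}

/-- support as a set -/
def fsupp (f : Perm X) : Set X := {x | f x ≠ x}

lemma fsupp_closed {f : Perm X} {s : Set X} (h : fsupp f ⊆ s) :
    ∀ x, x ∈ s ↔ f x ∈ s := by
  intro x
  constructor
  · intro hx
    by_cases hfx : f x = x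
    · rwa [hfx]
    · exact h (by simpa [fsupp] using (by simpa using f.injective.ne hfx : f (f x) ≠ f x))
  · intro hfx
    by_cases hfx' : f x = x
    · rwa [hfx'] at hfx
    · exact h hfx'

/-- sign computed on a finite closed superset of the support -/
def fsignOn (f : Perm X) (s : Set X) (hs : s.Finite) (hc : ∀ x, x ∈ s ↔ f x ∈ s) : ℤˣ :=
  letI := hs.fintype
  Equiv.Perm.sign (f.subtypePerm (fun x => (hc x).symm))

lemma fsignOn_eq_of_subset (f : Perm X) {s t : Set X} (hs : s.Finite) (ht : t.Finite)
    (hsupp : fsupp f ⊆ s) (hst : s ⊆ t) :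
    fsignOn f s hs (fsupp_closed hsupp) = fsignOn f t ht (fsupp_closed (hsupp.trans hst)) := by
  classical
  letI := hs.fintype
  letI := ht.fintype
  unfold fsignOn
  set F := f.subtypePerm (fun x => (fsupp_closed (hsupp.trans hst) x).symm) with hF
  have h₁ : ∀ x : t, (↑x ∈ s) ↔ (↑(F x) ∈ s) := by
    intro x
    exact fsupp_closed (s := s) hsupp (x : X)
  have h₂ : ∀ x : t, F x ≠ x → (↑x ∈ s) := by
    intro x hx
    apply hsupp
    intro hfx
    exact hx (Subtype.ext hfx)
  have key : Equiv.Perm.sign (F.subtypePerm (fun x => (h₁ x).symm)) = Equiv.Perm.sign F :=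
    Equiv.Perm.sign_subtypePerm F (fun x => (h₁ x).symm) h₂
  rw [← key]
  apply Equiv.Perm.sign_eq_sign_of_equiv
  case e =>
    exact (Equiv.subtypeSubtypeEquivSubtype (p := fun x => x ∈ t) (q := fun x => x ∈ s)
      (fun hx => hst hx)).symm
  · intro x
    apply Subtype.ext
    apply Subtype.ext
    rfl


/-- the sign of a finitely supported permutation -/
def fsign (f : Perm X) (hf : (fsupp f).Finite) : ℤˣ :=
  fsignOn f (fsupp f) hf (fsupp_closed le_rfl)

lemma fsign_eq (f : Perm X) (hf : (fsupp f).Finite) {s : Set X} (hs : s.Finite)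
    (hsupp : fsupp f ⊆ s) (hc : ∀ x, x ∈ s ↔ f x ∈ s) :
    fsign f hf = fsignOn f s hs hc :=
  fsignOn_eq_of_subset f hf hs le_rfl hsupp

lemma fsupp_mul (f g : Perm X) : fsupp (f * g) ⊆ fsupp f ∪ fsupp g := by
  intro x hx
  by_contra h
  simp only [Set.mem_union, fsupp, Set.mem_setOf_eq, not_or, not_not] at h
  exact hx (by simp [Equiv.Perm.mul_apply, h.1, h.2])

lemma fsign_mul (f g : Perm X) (hf : (fsupp f).Finite) (hg : (fsupp g).Finite)
    (hfg : (fsupp (f * g)).Finite) :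
    fsign (f * g) hfg = fsign f hf * fsign g hg := by
  classical
  set s := fsupp f ∪ fsupp g with hsdef
  have hs : s.Finite := hf.union hg
  have hf' : fsupp f ⊆ s := Set.subset_union_left
  have hg' : fsupp g ⊆ s := Set.subset_union_right
  have hfg' : fsupp (f * g) ⊆ s := fsupp_mul f g
  rw [fsign_eq f hf hs hf' (fsupp_closed hf'), fsign_eq g hg hs hg' (fsupp_closed hg'),
    fsign_eq (f * g) hfg hs hfg' (fsupp_closed hfg')]
  letI := hs.fintype
  unfold fsignOn
  rw [show (f * g).subtypePerm (fun x => (fsupp_closed hfg' x).symm) =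
      f.subtypePerm (fun x => (fsupp_closed hf' x).symm) *
        g.subtypePerm (fun x => (fsupp_closed hg' x).symm) from
    Equiv.ext fun x => rfl]
  exact map_mul _ _ _

lemma fsign_one : fsign (1 : Perm X) (by simp [fsupp]) = 1 := by
  classical
  have h : fsupp (1 : Perm X) = ∅ := by simp [fsupp]
  unfold fsign fsignOn
  rw [show (1 : Perm X).subtypePerm (fun x => (fsupp_closed le_rfl x).symm) = 1 from Equiv.ext fun x => rfl]
  exact map_one _

lemma fsupp_swap {a b : X} : fsupp (Equiv.swap a b) ⊆ {a, b} := by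
  intro x hx
  by_contra h
  simp only [Set.mem_insert_iff, Set.mem_singleton_iff, not_or] at h
  exact hx (Equiv.swap_apply_of_ne_of_ne h.1 h.2)

lemma fsupp_swap_finite {a b : X} : (fsupp (Equiv.swap a b)).Finite :=
  ((Set.finite_singleton b).insert a).subset fsupp_swap

lemma fsign_swap {a b : X} (hab : a ≠ b) :
    fsign (Equiv.swap a b) fsupp_swap_finite = -1 := by
  classical
  have hs : ({a, b} : Set X).Finite := (Set.finite_singleton b).insert a
  rw [fsign_eq _ _ hs fsupp_swap (fsupp_closed fsupp_swap)]
  letI := hs.fintype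
  unfold fsignOn
  have ha : a ∈ ({a, b} : Set X) := Or.inl rfl
  have hb : b ∈ ({a, b} : Set X) := Or.inr rfl
  have : (Equiv.swap a b).subtypePerm
      (fun x => (fsupp_closed (fsupp_swap (a := a) (b := b)) x).symm) =
      Equiv.swap (⟨a, ha⟩ : ↥({a, b} : Set X)) ⟨b, hb⟩ := by
    apply Equiv.ext
    rintro ⟨x, hx | hx⟩
    · subst hx
      simp [Equiv.Perm.subtypePerm_apply, Equiv.swap_apply_left, Subtype.ext_iff]
    · simp only [Set.mem_singleton_iff] at hx
      subst hx
      simp [Equiv.Perm.subtypePerm_apply, Equiv.swap_apply_right, Subtype.ext_iff]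
  rw [this]
  exact Equiv.Perm.sign_swap (by simpa [Subtype.ext_iff] using hab)

/-- every finitely supported permutation is a product of swaps -/
lemma exists_swap_factors (f : Perm X) (hf : (fsupp f).Finite) :
    ∃ l : List (Perm X), (∀ t ∈ l, t.IsSwap) ∧ f = l.prod := by
  classical
  letI := hf.fintype
  obtain ⟨l, hl₁, hl₂⟩ := (Equiv.Perm.truncSwapFactors
    (f.subtypePerm (fun x => (fsupp_closed (f := f) le_rfl x).symm))).out
  refine ⟨l.map Equiv.Perm.ofSubtype, ?_, ?_⟩
  · intro t ht
    obtain ⟨g, hg, rfl⟩ := List.mem_map.1 ht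
    obtain ⟨x, y, hxy, rfl⟩ := hl₂ g hg
    rw [Equiv.Perm.ofSubtype_swap_eq]
    exact ⟨x, y, fun h => hxy (Subtype.ext h), rfl⟩
  · rw [l.prod_hom Equiv.Perm.ofSubtype, hl₁]
    exact (Equiv.Perm.ofSubtype_subtypePerm (p := fun x => x ∈ fsupp f)
      (fun x => (fsupp_closed le_rfl x).symm) (fun x hx => hx)).symm


end FinSuppAux

namespace FinSuppAux

variable {X : Type*}

lemma mem_finSuppPerm_iff {f : Perm X} : f ∈ finSuppPerm X ↔ (fsupp f).Finite := Iff.rfl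

lemma swap_mem {a b : X} : Equiv.swap a b ∈ finSuppPerm X := fsupp_swap_finite

lemma isSwap_mem {t : Perm X} (h : t.IsSwap) : t ∈ finSuppPerm X := by
  obtain ⟨a, b, -, rfl⟩ := h
  exact swap_mem

/-- The sign homomorphism on the finitary symmetric group. -/
def signHom : ↥(finSuppPerm X) →* ℤˣ where
  toFun f := fsign f.1 f.2
  map_one' := fsign_one
  map_mul' f g := fsign_mul f.1 g.1 f.2 g.2 _

lemma signHom_swap {a b : X} (hab : a ≠ b) (h : Equiv.swap a b ∈ finSuppPerm X) :
    signHom (⟨Equiv.swap a b, h⟩ : ↥(finSuppPerm X)) = -1 :=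
  fsign_swap hab

lemma signHom_prod_swaps (l : List (Perm X)) (hl : ∀ t ∈ l, t.IsSwap)
    (h : l.prod ∈ finSuppPerm X) :
    signHom (⟨l.prod, h⟩ : ↥(finSuppPerm X)) = (-1) ^ l.length := by
  induction l with
  | nil =>
      rw [show (⟨List.prod [], h⟩ : ↥(finSuppPerm X)) = 1 from Subtype.ext List.prod_nil]
      simp
  | cons t l ih =>
      have htm : t ∈ finSuppPerm X := isSwap_mem (hl t (List.mem_cons_self))
      have hlp : l.prod ∈ finSuppPerm X := by
        have : l.prod = t⁻¹ * (t :: l).prod := by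
          rw [List.prod_cons, inv_mul_cancel_left]
        rw [this]
        exact Subgroup.mul_mem _ (Subgroup.inv_mem _ htm) h
      have heq : (⟨(t :: l).prod, h⟩ : ↥(finSuppPerm X)) = ⟨t, htm⟩ * ⟨l.prod, hlp⟩ :=
        Subtype.ext List.prod_cons
      obtain ⟨a, b, hab, hts⟩ := hl t (List.mem_cons_self)
      rw [heq, map_mul, ih (fun u hu => hl u (List.mem_cons_of_mem _ hu)) hlp]
      have : signHom (⟨t, htm⟩ : ↥(finSuppPerm X)) = -1 := by
        subst hts
        exact signHom_swap hab _
      rw [this, List.length_cons, pow_succ]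
      exact mul_comm _ _

lemma signHom_conj (g : Perm X) (f : ↥(finSuppPerm X)) (h : g * ↑f * g⁻¹ ∈ finSuppPerm X) :
    signHom (⟨g * ↑f * g⁻¹, h⟩ : ↥(finSuppPerm X)) = signHom f := by
  classical
  obtain ⟨l, hl, hf⟩ := exists_swap_factors (f : Perm X) f.2
  set l' : List (Perm X) := l.map (fun t => g * t * g⁻¹) with hl'def
  have hprod : l'.prod = g * l.prod * g⁻¹ := by
    rw [hl'def]
    exact List.prod_hom l ((MulAut.conj g).toMonoidHom)
  have hl' : ∀ t ∈ l', t.IsSwap := by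
    intro t ht
    obtain ⟨u, hu, rfl⟩ := List.mem_map.1 ht
    obtain ⟨a, b, hab, rfl⟩ := hl u hu
    exact ⟨g a, g b, g.injective.ne hab, by rw [Equiv.swap_apply_apply]⟩
  have hm' : l'.prod ∈ finSuppPerm X := by rw [hprod, ← hf]; exact h
  have hm2 : l.prod ∈ finSuppPerm X := by rw [← hf]; exact f.2
  have h1 : (⟨g * ↑f * g⁻¹, h⟩ : ↥(finSuppPerm X)) = ⟨l'.prod, hm'⟩ :=
    Subtype.ext (by show g * ↑f * g⁻¹ = l'.prod; rw [hprod, ← hf])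
  have h2 : f = ⟨l.prod, hm2⟩ := Subtype.ext hf
  rw [(congrArg signHom h1).trans (signHom_prod_swaps l' hl' hm'),
    (congrArg signHom h2).trans (signHom_prod_swaps l hl hm2), hl'def, List.length_map]

lemma exists_map_pair {a b c d : X} (hab : a ≠ b) (hcd : c ≠ d) :
    ∃ g : Perm X, g ∈ finSuppPerm X ∧ g a = c ∧ g b = d := by
  classical
  set b' := Equiv.swap a c b with hb'
  by_cases h : b' = d
  · exact ⟨Equiv.swap a c, swap_mem, Equiv.swap_apply_left a c, h⟩
  · refine ⟨Equiv.swap b' d * Equiv.swap a c, Subgroup.mul_mem _ swap_mem swap_mem, ?_, ?_⟩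
    · have hcb' : c ≠ b' := fun hh => hab ((Equiv.swap a c).injective
        ((Equiv.swap_apply_left a c).trans (hh.trans hb')))
      simp only [Equiv.Perm.mul_apply, Equiv.swap_apply_left]
      exact Equiv.swap_apply_of_ne_of_ne hcb' hcd
    · simp only [Equiv.Perm.mul_apply, ← hb', Equiv.swap_apply_left]

open scoped commutatorElement in
lemma pair_swap_mem_commutator {t1 t2 : Perm X} (h1 : t1.IsSwap) (h2 : t2.IsSwap)
    (hm : t1 * t2 ∈ finSuppPerm X) :
    (⟨t1 * t2, hm⟩ : ↥(finSuppPerm X)) ∈ commutator ↥(finSuppPerm X) := by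
  classical
  obtain ⟨a, b, hab, rfl⟩ := h1
  obtain ⟨c, d, hcd, rfl⟩ := h2
  obtain ⟨g, hg, hga, hgb⟩ := exists_map_pair hab hcd
  have key : g * Equiv.swap a b * g⁻¹ = Equiv.swap c d := by
    rw [← Equiv.swap_apply_apply, hga, hgb]
  have hcomm : (⟨Equiv.swap a b * Equiv.swap c d, hm⟩ : ↥(finSuppPerm X)) =
      ⁅(⟨Equiv.swap a b, swap_mem⟩ : ↥(finSuppPerm X)), ⟨g, hg⟩⁆ := by
    apply Subtype.ext
    show Equiv.swap a b * Equiv.swap c d =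
      Equiv.swap a b * g * (Equiv.swap a b)⁻¹ * g⁻¹
    rw [Equiv.swap_inv, ← key]
    group
  rw [hcomm, commutator_def]
  exact Subgroup.commutator_mem_commutator (Subgroup.mem_top _) (Subgroup.mem_top _)

lemma even_swaps_prod_mem_commutator :
    ∀ (n : ℕ) (l : List (Perm X)), l.length = 2 * n → (∀ t ∈ l, t.IsSwap) →
      ∀ hm : l.prod ∈ finSuppPerm X,
        (⟨l.prod, hm⟩ : ↥(finSuppPerm X)) ∈ commutator ↥(finSuppPerm X) := by
  intro n
  induction n with
  | zero =>
      intro l hlen _ hm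
      have : l = [] := List.length_eq_zero_iff.mp (by omega)
      subst this
      rw [show (⟨List.prod [], hm⟩ : ↥(finSuppPerm X)) = 1 from Subtype.ext List.prod_nil]
      exact Subgroup.one_mem _
  | succ n ih =>
      intro l hlen hl hm
      match l, hlen with
      | t1 :: t2 :: rest, hlen =>
        have h1 := hl t1 (List.mem_cons_self)
        have h2 := hl t2 (List.mem_cons_of_mem _ (List.mem_cons_self))
        have h12 : t1 * t2 ∈ finSuppPerm X :=
          Subgroup.mul_mem _ (isSwap_mem h1) (isSwap_mem h2)
        have hrest : rest.prod ∈ finSuppPerm X := by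
          have : rest.prod = (t1 * t2)⁻¹ * (t1 :: t2 :: rest).prod := by
            rw [List.prod_cons, List.prod_cons]
            group
          rw [this]
          exact Subgroup.mul_mem _ (Subgroup.inv_mem _ h12) hm
        have heq : (⟨(t1 :: t2 :: rest).prod, hm⟩ : ↥(finSuppPerm X)) =
            ⟨t1 * t2, h12⟩ * ⟨rest.prod, hrest⟩ := by
          apply Subtype.ext
          show (t1 :: t2 :: rest).prod = t1 * t2 * rest.prod
          rw [List.prod_cons, List.prod_cons, mul_assoc]
        rw [heq]
        refine Subgroup.mul_mem _ (pair_swap_mem_commutator h1 h2 h12) ?_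
        refine ih rest ?_ (fun t ht => hl t (List.mem_cons_of_mem _
          (List.mem_cons_of_mem _ ht))) hrest
        simp only [List.length_cons] at hlen
        omega

lemma commutator_eq_ker_signHom :
    commutator ↥(finSuppPerm X) = MonoidHom.ker (signHom (X := X)) := by
  apply le_antisymm
  · exact Abelianization.commutator_subset_ker signHom
  · intro f hf
    obtain ⟨l, hl, hfl⟩ := exists_swap_factors (f : Perm X) f.2
    have hmem : l.prod ∈ finSuppPerm X := hfl ▸ f.2
    have hfeq : f = ⟨l.prod, hmem⟩ := Subtype.ext hfl
    have hsign : ((-1 : ℤˣ)) ^ l.length = 1 := by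
      rw [← signHom_prod_swaps l hl hmem, ← hfeq]
      exact hf
    have heven : Even l.length := by
      rcases Nat.even_or_odd l.length with h | h
      · exact h
      · rw [h.neg_one_pow] at hsign
        exact absurd hsign (by decide)
    obtain ⟨k, hk⟩ := heven
    rw [hfeq]
    exact even_swaps_prod_mem_commutator k l (by omega) hl hmem

lemma signHom_surjective [Nontrivial X] : Function.Surjective (signHom (X := X)) := by
  intro u
  rcases Int.units_eq_one_or u with rfl | rfl
  · exact ⟨1, map_one _⟩
  · obtain ⟨a, b, hab⟩ := exists_pair_ne X
    exact ⟨⟨Equiv.swap a b, swap_mem⟩, signHom_swap hab _⟩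

lemma finSuppPerm_normal : (finSuppPerm X).Normal := by
  constructor
  intro f hf g
  have hsub : {x | (g * f * g⁻¹) x ≠ x} ⊆ g '' {x | f x ≠ x} := by
    intro x hx
    refine ⟨g⁻¹ x, ?_, by simp⟩
    intro hfx
    apply hx
    show g (f (g⁻¹ x)) = x
    rw [hfx]
    simp
  exact (hf.image g).subset hsub

lemma mem_finAltPerm_iff {f : Perm X} :
    f ∈ finAltPerm X ↔ ∃ h : f ∈ finSuppPerm X, signHom ⟨f, h⟩ = 1 := by
  constructor
  · rintro ⟨y, hy, rfl⟩
    rw [commutator_eq_ker_signHom] at hy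
    exact ⟨y.2, hy⟩
  · rintro ⟨h, hs⟩
    exact ⟨⟨f, h⟩, by rw [commutator_eq_ker_signHom]; exact hs, rfl⟩

lemma finAltPerm_normal : (finAltPerm X).Normal := by
  constructor
  intro f hf g
  rw [mem_finAltPerm_iff] at hf ⊢
  obtain ⟨hfS, hsign⟩ := hf
  have hm : g * f * g⁻¹ ∈ finSuppPerm X := finSuppPerm_normal.conj_mem f hfS g
  exact ⟨hm, by rw [signHom_conj g ⟨f, hfS⟩ hm]; exact hsign⟩

lemma card_quot [Nontrivial X] :
    Nat.card (↥(finSuppPerm X) ⧸ commutator ↥(finSuppPerm X)) = 2 := by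
  rw [commutator_eq_ker_signHom]
  rw [Nat.card_congr
    (QuotientGroup.quotientKerEquivOfSurjective signHom signHom_surjective).toEquiv]
  rw [Nat.card_eq_fintype_card]
  rfl

end FinSuppAux

/-- Let `X` be an infinite set and `G` any subgroup of the permutation group of `X` containing
`𝔖(X)`. Then `𝔖(X)` and `𝔄(X)` are normal subgroups of `G`, the quotient `𝔖(X)/𝔄(X)` has
order 2, and the image of `𝔖(X)/𝔄(X)` in `G/𝔄(X)` is contained in the center of `G/𝔄(X)`,
so that `1 → ℤ/2ℤ → G/𝔄(X) → G/𝔖(X) → 1` is a central extension. -/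
theorem finSuppPerm_central_extension (X : Type*) [Infinite X]
    (G : Subgroup (Equiv.Perm X)) (hG : finSuppPerm X ≤ G) :
    ((finSuppPerm X).subgroupOf G).Normal ∧
    ∃ hA : ((finAltPerm X).subgroupOf G).Normal,
      Nat.card (↥(finSuppPerm X) ⧸ commutator ↥(finSuppPerm X)) = 2 ∧
      (letI := hA;
        Subgroup.map (QuotientGroup.mk' ((finAltPerm X).subgroupOf G))
            ((finSuppPerm X).subgroupOf G) ≤
          Subgroup.center (↥G ⧸ (finAltPerm X).subgroupOf G)) := by
  classical
  refine ⟨FinSuppAux.finSuppPerm_normal.subgroupOf G,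
    FinSuppAux.finAltPerm_normal.subgroupOf G, FinSuppAux.card_quot, ?_⟩
  haveI : ((finAltPerm X).subgroupOf G).Normal := FinSuppAux.finAltPerm_normal.subgroupOf G
  intro q hq
  rw [Subgroup.mem_map] at hq
  obtain ⟨s, hs, rfl⟩ := hq
  have hs' : (↑s : Equiv.Perm X) ∈ finSuppPerm X := Subgroup.mem_subgroupOf.mp hs
  rw [Subgroup.mem_center_iff]
  intro z
  refine QuotientGroup.induction_on z fun g => ?_
  have hg0 : (QuotientGroup.mk g : ↥G ⧸ (finAltPerm X).subgroupOf G) =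
      (QuotientGroup.mk' ((finAltPerm X).subgroupOf G)) g := rfl
  rw [hg0, ← map_mul, ← map_mul, QuotientGroup.mk'_apply, QuotientGroup.mk'_apply,
    QuotientGroup.eq, Subgroup.mem_subgroupOf]
  set σ : Equiv.Perm X := (↑s : Equiv.Perm X) with hσ
  set γ : Equiv.Perm X := (↑g : Equiv.Perm X) with hγ
  have hel : ((↑((g * s)⁻¹ * (s * g)) : Equiv.Perm X)) = σ⁻¹ * (γ⁻¹ * σ * γ) := by
    push_cast
    rw [mul_inv_rev]
    rw [hσ, hγ]
    group
  rw [hel, FinSuppAux.mem_finAltPerm_iff]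
  have hconj : γ⁻¹ * σ * γ ∈ finSuppPerm X := by
    have := FinSuppAux.finSuppPerm_normal.conj_mem σ hs' γ⁻¹
    rwa [inv_inv] at this
  have hmem : σ⁻¹ * (γ⁻¹ * σ * γ) ∈ finSuppPerm X :=
    Subgroup.mul_mem _ (Subgroup.inv_mem _ hs') hconj
  refine ⟨hmem, ?_⟩
  have h' : γ⁻¹ * σ * (γ⁻¹)⁻¹ ∈ finSuppPerm X := by rw [inv_inv]; exact hconj
  have hconj2 : FinSuppAux.signHom (⟨γ⁻¹ * σ * γ, hconj⟩ : ↥(finSuppPerm X)) =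
      FinSuppAux.signHom (⟨σ, hs'⟩ : ↥(finSuppPerm X)) := by
    have h2 := FinSuppAux.signHom_conj γ⁻¹ ⟨σ, hs'⟩ h'
    rwa [show (⟨γ⁻¹ * ↑(⟨σ, hs'⟩ : ↥(finSuppPerm X)) * (γ⁻¹)⁻¹, h'⟩ : ↥(finSuppPerm X)) =
      ⟨γ⁻¹ * σ * γ, hconj⟩ from Subtype.ext (by show γ⁻¹ * σ * (γ⁻¹)⁻¹ = γ⁻¹ * σ * γ; rw [inv_inv])] at h2
  rw [show (⟨σ⁻¹ * (γ⁻¹ * σ * γ), hmem⟩ : ↥(finSuppPerm X)) =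
      (⟨σ, hs'⟩ : ↥(finSuppPerm X))⁻¹ * ⟨γ⁻¹ * σ * γ, hconj⟩ from Subtype.ext rfl,
    map_mul, map_inv, hconj2]
  exact inv_mul_cancel _
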